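/- Let p be a prime number and let c be a real number with c ≥ p. Then f_{p,c} is a Euclidean function on ℤ: for all a, b ∈ ℤ with b ≠ 0 there exists q ∈ ℤ such that f_{p,c}(a − bq) < f_{p,c}(b). -/

import Mathlib

open scoped Classical

/-- The weighted norm `f_{p,c}` on `ℚ`:  `f_{p,c}(x) = |x| · (c/p)^{v_p(x)}` for `x ≠ 0`,
and `f_{p,c}(0) = 0`, where `v_p` is the `p`-adic valuation. -/
noncomputable def fpc (p : ℕ) (c : ℝ) (x : ℚ) : ℝ :=
  if x = 0 then 0 else |(x : ℝ)| * (c / p) ^ (padicValRat p x)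

private lemma fpc_key (p : ℕ) (hp : p.Prime) (c : ℝ) (hc : (p : ℝ) ≤ c)
    {r b : ℚ} (hr : r ≠ 0) (hb : b ≠ 0)
    (habs : |(r : ℝ)| < |(b : ℝ)|)
    (hval : padicValRat p r ≤ padicValRat p b) :
    fpc p c r < fpc p c b := by
  have hp0 : (0:ℝ) < p := by exact_mod_cast hp.pos
  have hx1 : (1:ℝ) ≤ c / p := (one_le_div hp0).mpr hc
  have hx0 : (0:ℝ) < c / p := lt_of_lt_of_le one_pos hx1
  rw [fpc, fpc, if_neg hr, if_neg hb]
  calc |(r:ℝ)| * (c/p) ^ padicValRat p r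
      ≤ |(r:ℝ)| * (c/p) ^ padicValRat p b :=
        mul_le_mul_of_nonneg_left (zpow_le_zpow_right₀ hx1 hval) (abs_nonneg _)
    _ < |(b:ℝ)| * (c/p) ^ padicValRat p b :=
        mul_lt_mul_of_pos_right habs (zpow_pos hx0 _)

/-- For a prime `p` and a real `c ≥ p`, the weighted norm `f_{p,c}` is a
Euclidean function on `ℤ`. -/
theorem fpc_euclidean_of_ge (p : ℕ) (hp : p.Prime) (c : ℝ) (hc : (p : ℝ) ≤ c) :
    ∀ a b : ℤ, b ≠ 0 → ∃ q : ℤ, fpc p c ((a : ℚ) - b * q) < fpc p c (b : ℚ) := by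
  haveI : Fact p.Prime := ⟨hp⟩
  intro a b hb
  have hbq : (b : ℚ) ≠ 0 := by exact_mod_cast hb
  have hp0 : (0:ℝ) < p := by exact_mod_cast hp.pos
  have hx1 : (1:ℝ) ≤ c / p := (one_le_div hp0).mpr hc
  have hx0 : (0:ℝ) < c / p := lt_of_lt_of_le one_pos hx1
  set r0 : ℤ := a % b with hr0
  have hr0nn : 0 ≤ r0 := Int.emod_nonneg a hb
  have hr0lt : r0 < |b| := Int.emod_lt_abs a hb
  have hdef : r0 = a - b * (a / b) := Int.emod_def a b
  by_cases h0 : r0 = 0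
  · refine ⟨a / b, ?_⟩
    have : (a : ℚ) - b * (a / b : ℤ) = 0 := by
      have : (a : ℤ) - b * (a / b) = 0 := by omega
      exact_mod_cast congrArg (Int.cast : ℤ → ℚ) this
    rw [this, fpc, fpc, if_pos rfl, if_neg hbq]
    exact mul_pos (abs_pos.mpr (by exact_mod_cast hb)) (zpow_pos hx0 _)
  · by_cases hv : padicValRat p (r0 : ℚ) ≤ padicValRat p (b : ℚ)
    · refine ⟨a / b, ?_⟩
      have hcast : (a : ℚ) - b * (a / b : ℤ) = (r0 : ℚ) := by
        rw [hdef]; push_cast; ring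
      rw [hcast]
      refine fpc_key p hp c hc (by exact_mod_cast h0) hbq ?_ hv
      have : |r0| < |b| := by rw [abs_of_nonneg hr0nn]; exact hr0lt
      calc |((r0:ℚ):ℝ)| = ((|r0| : ℤ) : ℝ) := by push_cast [abs_abs]; rfl
        _ < ((|b| : ℤ) : ℝ) := by exact_mod_cast this
        _ = |((b:ℚ):ℝ)| := by push_cast [abs_abs]; rfl
    · push_neg at hv
      refine ⟨a / b + b.sign, ?_⟩
      have hmulsign : b * b.sign = |b| := by rw [Int.mul_sign_self, Int.abs_eq_natAbs]
      set r : ℤ := r0 - |b| with hrdef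
      have hcast : (a : ℚ) - b * ((a / b + b.sign : ℤ) : ℚ) = (r : ℚ) := by
        have : (r : ℤ) = a - b * (a / b + b.sign) := by
          rw [hrdef, hdef, ← hmulsign]; ring
        rw [this]; push_cast; ring
      have hrneg : r < 0 := by omega
      have hrne : r ≠ 0 := by omega
      have hrabs : |r| < |b| := by
        have : 0 < r0 := lt_of_le_of_ne hr0nn (Ne.symm h0)
        rw [abs_of_neg hrneg]; omega
      -- valuation of r equals valuation of b
      have hvb : padicValRat p ((|b| : ℤ) : ℚ) = padicValRat p (b : ℚ) := by
        rcases abs_choice b with h | h <;> rw [h]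
        push_cast
        exact padicValRat.neg _
      have hvr : padicValRat p (r : ℚ) = padicValRat p (b : ℚ) := by
        have h1 : ((-(|b|:ℤ) : ℤ) : ℚ) + (r0 : ℚ) = (r : ℚ) := by rw [hrdef]; push_cast; ring
        have h2 : padicValRat p ((-(|b|:ℤ) : ℤ) : ℚ) < padicValRat p (r0 : ℚ) := by
          rwa [show ((-(|b|:ℤ) : ℤ) : ℚ) = -((|b|:ℤ) : ℚ) by push_cast; ring,
            padicValRat.neg, hvb]
        have := padicValRat.add_eq_of_lt (p := p)
          (q := ((-(|b|:ℤ) : ℤ) : ℚ)) (r := (r0 : ℚ))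
          (by rw [h1]; exact_mod_cast hrne)
          (by simp; omega) (by exact_mod_cast h0) h2
        rw [h1] at this
        rw [this, show ((-(|b|:ℤ) : ℤ) : ℚ) = -((|b|:ℤ) : ℚ) by push_cast; ring,
          padicValRat.neg, hvb]
      rw [hcast]
      refine fpc_key p hp c hc (by exact_mod_cast hrne) hbq ?_ (le_of_eq hvr)
      calc |((r:ℚ):ℝ)| = ((|r| : ℤ) : ℝ) := by push_cast [abs_abs]; rfl
        _ < ((|b| : ℤ) : ℝ) := by exact_mod_cast hrabs
        _ = |((b:ℚ):ℝ)| := by push_cast [abs_abs]; rfl
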